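/- arXiv:1404.1312 — 3 statements merged into one kernel-verified Lean document; each statement's English description precedes it below -/
import Mathlib

section
/- Let ω = e^{2πi/3}. A nonzero, non-unit element ϱ of the Eisenstein integers ℤ[ω] is prime if and only if exactly one of the following mutually exclusive conditions holds: (1) ϱ equals the product of a unit of ℤ[ω] and a natural prime p with p ≡ 2 (mod 3); (2) |ϱ|² = 3, or |ϱ|² is a natural prime congruent to 1 (mod 3). -/
/-- ω = e^{2πi/3} = -1/2 + i√3/2. -/
noncomputable def eisω : ℂ := -1/2 + (Real.sqrt 3 / 2) * Complex.I

/-- The ring of Eisenstein integers ℤ[ω], as a subring of ℂ. -/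
noncomputable def Eis : Subring ℂ := Subring.closure {eisω}


lemma eisω_re : eisω.re = -1/2 := by simp [eisω]
lemma eisω_im : eisω.im = Real.sqrt 3 / 2 := by simp [eisω]

lemma sq3 : Real.sqrt 3 * Real.sqrt 3 = 3 := Real.mul_self_sqrt (by norm_num)

lemma eisω_sq : eisω ^ 2 = -1 - eisω := by
  apply Complex.ext <;>
  simp [eisω, pow_two, Complex.mul_re, Complex.mul_im] <;> nlinarith [sq3]

/-- normSq of a real combination a + b ω. -/
lemma normSq_comb (a b : ℝ) :
    Complex.normSq ((a : ℂ) + (b : ℂ) * eisω) = a^2 - a*b + b^2 := by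
  simp [Complex.normSq_apply, eisω, Complex.mul_re, Complex.mul_im]
  nlinarith [sq3]

lemma mem_Eis_iff {z : ℂ} : z ∈ Eis ↔ ∃ a b : ℤ, z = (a : ℂ) + (b : ℂ) * eisω := by
  constructor
  · intro hz
    induction hz using Subring.closure_induction with
    | mem x hx => exact ⟨0, 1, by simp [Set.mem_singleton_iff.mp hx]⟩
    | zero => exact ⟨0, 0, by simp⟩
    | one => exact ⟨1, 0, by simp⟩
    | add x y _ _ hx hy =>
        obtain ⟨a, b, rfl⟩ := hx; obtain ⟨c, d, rfl⟩ := hy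
        exact ⟨a + c, b + d, by push_cast; ring⟩
    | neg x _ hx =>
        obtain ⟨a, b, rfl⟩ := hx; exact ⟨-a, -b, by push_cast; ring⟩
    | mul x y _ _ hx hy =>
        obtain ⟨a, b, rfl⟩ := hx; obtain ⟨c, d, rfl⟩ := hy
        refine ⟨a*c - b*d, a*d + b*c - b*d, ?_⟩
        have h := eisω_sq
        push_cast
        linear_combination ((b:ℂ)*(d:ℂ)) * eisω_sq
  · rintro ⟨a, b, rfl⟩
    exact Subring.add_mem _ (intCast_mem _ _)
      (Subring.mul_mem _ (intCast_mem _ _)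
        (Subring.subset_closure rfl))

/-- Natural-number norm on Eis. -/
noncomputable def nrm (x : Eis) : ℕ := ⌊Complex.normSq (x : ℂ)⌋₊

lemma normSq_int (x : Eis) : ∃ n : ℤ, 0 ≤ n ∧ Complex.normSq (x : ℂ) = n := by
  obtain ⟨a, b, h⟩ := mem_Eis_iff.mp x.2
  refine ⟨a^2 - a*b + b^2, by nlinarith [sq_nonneg (a-b), sq_nonneg a, sq_nonneg b], ?_⟩
  rw [h]
  have := normSq_comb (a : ℝ) (b : ℝ)
  push_cast at this ⊢
  rw [this]

lemma nrm_cast (x : Eis) : (nrm x : ℝ) = Complex.normSq (x : ℂ) := by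
  obtain ⟨n, hn, h⟩ := normSq_int x
  have h2 : Complex.normSq (x:ℂ) = ((n.toNat : ℕ) : ℝ) := by
    rw [h]; exact_mod_cast (Int.toNat_of_nonneg hn).symm
  rw [nrm, h2, Nat.floor_natCast]

lemma nrm_mul (x y : Eis) : nrm (x * y) = nrm x * nrm y := by
  have : ((nrm (x*y) : ℕ) : ℝ) = ((nrm x * nrm y : ℕ) : ℝ) := by
    push_cast
    rw [nrm_cast, nrm_cast, nrm_cast]
    simp [Complex.normSq_mul]
  exact_mod_cast this

lemma nrm_eq_zero {x : Eis} : nrm x = 0 ↔ x = 0 := by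
  constructor
  · intro h
    have : Complex.normSq (x : ℂ) = 0 := by rw [← nrm_cast, h]; simp
    have : (x : ℂ) = 0 := Complex.normSq_eq_zero.mp this
    exact Subtype.ext this
  · rintro rfl; simp [nrm]

/-- conjugation preserves Eis -/
lemma conj_mem (x : Eis) : (starRingEnd ℂ) (x : ℂ) ∈ Eis := by
  obtain ⟨a, b, h⟩ := mem_Eis_iff.mp x.2
  rw [h]
  refine mem_Eis_iff.mpr ⟨a - b, -b, ?_⟩
  have him : (starRingEnd ℂ) eisω = -1 - eisω := by
    have h1 : (starRingEnd ℂ) eisω = -1/2 - (Real.sqrt 3 / 2) * Complex.I := by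
      simp [eisω, map_ofNat, Complex.conj_ofReal]; ring
    rw [h1, eisω]; ring
  simp only [map_add, map_mul, map_intCast, him]
  push_cast; ring

noncomputable def econj (x : Eis) : Eis := ⟨(starRingEnd ℂ) (x : ℂ), conj_mem x⟩

lemma mul_econj (x : Eis) : x * econj x = (nrm x : Eis) := by
  apply Subtype.ext
  push_cast [econj]
  rw [Complex.mul_conj]
  exact_mod_cast (nrm_cast x).symm

lemma isUnit_iff_nrm {x : Eis} : IsUnit x ↔ nrm x = 1 := by
  constructor
  · rintro ⟨u, rfl⟩
    have h : nrm (u : Eis) * nrm ((u⁻¹ : Eisˣ) : Eis) = 1 := by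
      rw [← nrm_mul, Units.mul_inv]
      simp [nrm]
    exact Nat.eq_one_of_mul_eq_one_right h
  · intro h
    refine IsUnit.of_mul_eq_one (econj x) ?_
    rw [mul_econj, h]; norm_num

lemma exists_coords (x : Eis) : ∃ a b : ℤ,
    (x : ℂ) = (a : ℂ) + (b : ℂ) * eisω ∧ (nrm x : ℤ) = a^2 - a*b + b^2 := by
  obtain ⟨a, b, h⟩ := mem_Eis_iff.mp x.2
  refine ⟨a, b, h, ?_⟩
  have h1 : (nrm x : ℝ) = ((a^2 - a*b + b^2 : ℤ) : ℝ) := by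
    rw [nrm_cast, h]
    have := normSq_comb (a : ℝ) (b : ℝ)
    push_cast at this ⊢
    rw [this]
  exact_mod_cast h1

lemma nrm_mod3 (x : Eis) : nrm x % 3 ≠ 2 := by
  intro h
  obtain ⟨a, b, _, hn⟩ := exists_coords x
  have h2 : ((nrm x : ℕ) : ZMod 3) = 2 := by
    rw [← ZMod.natCast_mod, h]; rfl
  have h3 : ((a + b : ℤ) : ZMod 3)^2 = 2 := by
    have h4 : (((nrm x : ℤ)) : ZMod 3) = ((a+b:ℤ) : ZMod 3)^2 := by
      have h30 : (3 : ZMod 3) = 0 := rfl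
      rw [hn]; push_cast
      linear_combination (-((a:ZMod 3) * (b:ZMod 3))) * h30
    rw [← h2]
    exact_mod_cast h4.symm
  have : ∀ c : ZMod 3, c^2 ≠ 2 := by decide
  exact this _ h3

lemma coe_natCast (n : ℕ) : (((n : Eis)) : ℂ) = (n : ℂ) := by push_cast; rfl

lemma nrm_natCast (n : ℕ) : nrm (n : Eis) = n * n := by
  have : (nrm ((n : ℕ) : Eis) : ℝ) = ((n * n : ℕ) : ℝ) := by
    rw [nrm_cast, coe_natCast]
    push_cast
    simp [Complex.normSq_apply]
  exact_mod_cast this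

lemma nrm_dvd {x y : Eis} (h : x ∣ y) : nrm x ∣ nrm y := by
  obtain ⟨c, rfl⟩ := h; exact ⟨nrm c, nrm_mul x c⟩

/-- Rounding to the nearest Eisenstein integer. -/
noncomputable def roundω (z : ℂ) : ℂ :=
  ((round (z.re + z.im / Real.sqrt 3) : ℤ) : ℂ) +
    ((round (2 * z.im / Real.sqrt 3) : ℤ) : ℂ) * eisω

lemma roundω_mem (z : ℂ) : roundω z ∈ Eis :=
  mem_Eis_iff.mpr ⟨_, _, rfl⟩

lemma roundω_zero : roundω 0 = 0 := by simp [roundω]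

lemma sqrt3_pos : (0:ℝ) < Real.sqrt 3 := Real.sqrt_pos.mpr (by norm_num)

/-- every complex number is close to an Eisenstein integer -/
lemma normSq_sub_roundω (z : ℂ) : Complex.normSq (z - roundω z) ≤ 3/4 := by
  set x : ℝ := z.re + z.im / Real.sqrt 3 with hx
  set y : ℝ := 2 * z.im / Real.sqrt 3 with hy
  have hz : z = (x : ℂ) + (y : ℂ) * eisω := by
    apply Complex.ext <;> simp [eisω, Complex.mul_re, Complex.mul_im, hx, hy] <;>
      field_simp <;> nlinarith [sq3, sqrt3_pos]
  have hr : roundω z = ((round x : ℤ) : ℂ) + ((round y : ℤ) : ℂ) * eisω := by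
    rw [roundω, ← hx, ← hy]
  have hsub : z - roundω z = ((x - round x : ℝ) : ℂ) + ((y - round y : ℝ) : ℂ) * eisω := by
    rw [hr]; nth_rewrite 1 [hz]; push_cast; ring
  rw [hsub, normSq_comb]
  have hu := abs_sub_round x
  have hv := abs_sub_round y
  rw [abs_le] at hu hv
  set u := x - round x
  set v := y - round y
  nlinarith [sq_nonneg (u + v), sq_nonneg (u - v), hu.1, hu.2, hv.1, hv.2]

noncomputable def eisQuot (a b : Eis) : Eis := ⟨roundω ((a : ℂ) / (b : ℂ)), roundω_mem _⟩

lemma nrm_lt_of_rem {a b : Eis} (hb : b ≠ 0) : nrm (a - b * eisQuot a b) < nrm b := by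
  have hb' : (b : ℂ) ≠ 0 := fun h => hb (Subtype.ext h)
  have key : ((a : Eis) - b * eisQuot a b : Eis) = (b : ℂ) * ((a:ℂ)/(b:ℂ) - roundω ((a:ℂ)/(b:ℂ))) := by
    push_cast [eisQuot]
    field_simp
  have h1 : Complex.normSq ((a - b * eisQuot a b : Eis) : ℂ) ≤ Complex.normSq (b : ℂ) * (3/4) := by
    rw [key, Complex.normSq_mul]
    have := normSq_sub_roundω ((a:ℂ)/(b:ℂ))
    have hnn : 0 ≤ Complex.normSq (b:ℂ) := Complex.normSq_nonneg _
    nlinarith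
  have h2 : (0:ℝ) < Complex.normSq (b : ℂ) := Complex.normSq_pos.mpr hb'
  have h3 : (nrm (a - b * eisQuot a b) : ℝ) < (nrm b : ℝ) := by
    rw [nrm_cast, nrm_cast]; nlinarith
  exact_mod_cast h3

noncomputable instance : EuclideanDomain Eis where
  __ := (inferInstance : CommRing Eis)
  __ := (inferInstance : Nontrivial Eis)
  quotient := eisQuot
  quotient_zero a := by
    apply Subtype.ext
    simp [eisQuot, roundω_zero]
  remainder a b := a - b * eisQuot a b
  quotient_mul_add_remainder_eq a b := by ring
  r a b := nrm a < nrm b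
  r_wellFounded := (InvImage.wf nrm Nat.lt_wfRel.wf)
  remainder_lt a b hb := nrm_lt_of_rem hb
  mul_left_not_lt a b hb := by
    intro hlt
    rw [nrm_mul] at hlt
    have h1 : 1 ≤ nrm b := Nat.one_le_iff_ne_zero.mpr (fun h => hb (nrm_eq_zero.mp h))
    have h0 : nrm a ≠ 0 → False := fun _ => by nlinarith
    rcases Nat.eq_zero_or_pos (nrm a) with h | h
    · rw [h] at hlt; omega
    · nlinarith

example : IsPrincipalIdealRing Eis := inferInstance

set_option synthInstance.maxHeartbeats 1000000 in
lemma irr_prime {x : Eis} (h : Irreducible x) : Prime x :=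
  irreducible_iff_prime.mp h

lemma nrm_pos {x : Eis} (h : x ≠ 0) : 0 < nrm x :=
  Nat.pos_of_ne_zero (fun hh => h (nrm_eq_zero.mp hh))

lemma prime_of_nrm_prime {x : Eis} (h : Nat.Prime (nrm x)) : Prime x := by
  apply irr_prime
  constructor
  · intro hu
    rw [isUnit_iff_nrm.mp hu] at h
    exact Nat.not_prime_one h
  · intro a b hab
    have hm : nrm x = nrm a * nrm b := by rw [hab, nrm_mul]
    rcases h.eq_one_or_self_of_dvd (nrm a) ⟨nrm b, hm⟩ with h1 | h1
    · exact Or.inl (isUnit_iff_nrm.mpr h1)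
    · right
      apply isUnit_iff_nrm.mpr
      have hpos : 0 < nrm x := h.pos
      rw [h1] at hm
      nlinarith [hm]

lemma coe_intCast (n : ℤ) : (((n : Eis)) : ℂ) = (n : ℂ) := by push_cast; rfl

/-- ω as an element of Eis -/
noncomputable def ωE : Eis := ⟨eisω, Subring.subset_closure rfl⟩

lemma coe_ωE : ((ωE : Eis) : ℂ) = eisω := rfl

@[simp] lemma coe_two : (((2:Eis)) : ℂ) = 2 := rfl
@[simp] lemma coe_three : (((3:Eis)) : ℂ) = 3 := rfl

lemma three_factor : ((3 : ℕ) : Eis) = (1 - ωE) * (2 + ωE) := by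
  apply Subtype.ext
  rw [coe_natCast]
  push_cast [coe_ωE, coe_two]
  linear_combination (1 : ℂ) * eisω_sq

lemma nrm_one_sub_ω : nrm (1 - ωE) = 3 := by
  have : (nrm (1 - ωE) : ℝ) = ((3:ℕ) : ℝ) := by
    rw [nrm_cast]
    have h : ((1 - ωE : Eis) : ℂ) = ((1:ℝ):ℂ) + ((-1:ℝ):ℂ) * eisω := by
      push_cast [coe_ωE]; ring
    rw [h, normSq_comb]; norm_num
  exact_mod_cast this

lemma nrm_two_add_ω : nrm (2 + ωE) = 3 := by
  have : (nrm (2 + ωE) : ℝ) = ((3:ℕ) : ℝ) := by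
    rw [nrm_cast]
    have h : ((2 + ωE : Eis) : ℂ) = ((2:ℝ):ℂ) + ((1:ℝ):ℂ) * eisω := by
      push_cast [coe_ωE, coe_two]; ring
    rw [h, normSq_comb]; norm_num
  exact_mod_cast this

lemma not_prime_three : ¬ Prime ((3 : ℕ) : Eis) := by
  intro hp
  have h3 : nrm ((3:ℕ) : Eis) = 9 := by rw [nrm_natCast]
  rcases hp.2.2 (1 - ωE) (2 + ωE) (dvd_of_eq three_factor) with h | h
  · have := nrm_dvd h; rw [h3, nrm_one_sub_ω] at this; omega
  · have := nrm_dvd h; rw [h3, nrm_two_add_ω] at this; omega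

lemma sq_neg_three {p : ℕ} (hp : Nat.Prime p) (h1 : p % 3 = 1) :
    ∃ t : ℤ, (p : ℤ) ∣ t * t + 3 := by
  haveI : Fact p.Prime := ⟨hp⟩
  haveI : Fact (Nat.Prime 3) := ⟨by norm_num⟩
  have hcard : Fintype.card (ZMod p)ˣ = p - 1 := ZMod.card_units p
  have hdvd : 3 ∣ Fintype.card (ZMod p)ˣ := by
    rw [hcard]
    have hge : 2 ≤ p := hp.two_le
    omega
  obtain ⟨g, hg⟩ := exists_prime_orderOf_dvd_card 3 hdvd
  set z : ZMod p := ((g : (ZMod p)ˣ) : ZMod p) with hz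
  have hg3 : g ^ 3 = 1 := by rw [← hg]; exact pow_orderOf_eq_one g
  have hz3 : z ^ 3 = 1 := by
    rw [hz, ← Units.val_pow_eq_pow_val, hg3, Units.val_one]
  have hzne : z ≠ 1 := by
    intro hh
    have : g = 1 := Units.ext hh
    rw [this, orderOf_one] at hg
    omega
  have hfac : (z - 1) * (z^2 + z + 1) = 0 := by linear_combination hz3
  have hsum : z^2 + z + 1 = 0 := by
    rcases mul_eq_zero.mp hfac with h | h
    · exact absurd (sub_eq_zero.mp h) hzne
    · exact h
  have hsq : (2*z + 1)^2 = -3 := by linear_combination 4 * hsum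
  obtain ⟨t, ht⟩ := ZMod.intCast_surjective (2*z + 1)
  refine ⟨t, (ZMod.intCast_zmod_eq_zero_iff_dvd _ p).mp ?_⟩
  push_cast
  rw [ht]
  linear_combination hsq

noncomputable def ηE : Eis := 2 * ωE + 1

lemma coe_ηE : ((ηE : Eis) : ℂ) = 2 * eisω + 1 := by
  show ((2 * ωE + 1 : Eis) : ℂ) = _
  push_cast [coe_ωE, coe_two]
  ring

/-- if p divides t ± η then p divides 2 -/
lemma dvd_two_aux {p : ℕ} (t s : ℤ) (hs : s = 1 ∨ s = -1)
    (h : ((p : ℕ) : Eis) ∣ ((t : Eis) + (s : Eis) * ηE)) : (p : ℤ) ∣ 2 := by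
  obtain ⟨y, hy⟩ := h
  obtain ⟨c, d, hcd⟩ := mem_Eis_iff.mp y.2
  have hC : (t : ℂ) + (s : ℂ) * (2 * eisω + 1) = (p : ℂ) * ((c:ℂ) + (d:ℂ) * eisω) := by
    have h0 := congrArg (fun x : Eis => (x : ℂ)) hy
    push_cast [coe_ηE] at h0
    rw [hcd] at h0
    linear_combination h0
  have hIm := congrArg Complex.im hC
  simp only [Complex.add_im, Complex.mul_im, Complex.intCast_im, Complex.intCast_re,
    Complex.natCast_im, Complex.natCast_re, Complex.ofReal_im, eisω_im, eisω_re,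
    Complex.re_ofNat, Complex.im_ofNat, Complex.one_im, Complex.one_re,
    Complex.add_re, Complex.mul_re] at hIm
  -- hIm should reduce to s * √3 = p * (d * (√3/2)) modulo arithmetic
  have h3 : ((p * d : ℤ) : ℝ) = ((2 * s : ℤ) : ℝ) := by
    push_cast
    have hne : Real.sqrt 3 ≠ 0 := ne_of_gt sqrt3_pos
    field_simp at hIm ⊢
    nlinarith [hIm, sqrt3_pos, sq3]
  have h4 : (p : ℤ) * d = 2 * s := by exact_mod_cast h3
  rcases hs with rfl | rfl
  · exact ⟨d, by linarith⟩
  · exact ⟨-d, by rw [mul_neg]; linarith⟩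

lemma not_prime_one_mod3 {p : ℕ} (hp : Nat.Prime p) (h1 : p % 3 = 1) :
    ¬ Prime ((p : ℕ) : Eis) := by
  intro hpr
  obtain ⟨t, ht⟩ := sq_neg_three hp h1
  have hη2 : ((t : Eis) - ηE) * ((t : Eis) + ηE) = ((t * t + 3 : ℤ) : Eis) := by
    apply Subtype.ext
    push_cast [coe_ηE]
    norm_num
    linear_combination (-4 : ℂ) * eisω_sq
  have hd : ((p : ℕ) : Eis) ∣ ((t : Eis) - ηE) * ((t : Eis) + ηE) := by
    rw [hη2]
    obtain ⟨k, hk⟩ := ht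
    refine ⟨(k : Eis), ?_⟩
    apply Subtype.ext
    push_cast
    rw [coe_three]
    exact_mod_cast congrArg (fun n : ℤ => (n : ℂ)) hk
  have hp2 : (p : ℤ) ∣ 2 := by
    rcases hpr.2.2 _ _ hd with h | h
    · refine dvd_two_aux t (-1) (Or.inr rfl) ?_
      have : ((t : Eis) + ((-1 : ℤ) : Eis) * ηE) = ((t : Eis) - ηE) := by push_cast; ring
      rwa [this]
    · refine dvd_two_aux t 1 (Or.inl rfl) ?_
      have : ((t : Eis) + ((1 : ℤ) : Eis) * ηE) = ((t : Eis) + ηE) := by push_cast; ring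
      rwa [this]
  have : p ∣ 2 := by exact_mod_cast hp2
  rcases (Nat.prime_dvd_prime_iff_eq hp Nat.prime_two).mp this with rfl
  omega

lemma prime_two_mod3 {p : ℕ} (hp : Nat.Prime p) (h2 : p % 3 = 2) :
    Prime ((p : ℕ) : Eis) := by
  apply irr_prime
  have hnrmp : nrm ((p:ℕ) : Eis) = p * p := nrm_natCast p
  constructor
  · intro hu
    have := isUnit_iff_nrm.mp hu
    rw [hnrmp] at this
    have := hp.two_le
    nlinarith
  · intro a b hab
    have hm : p * p = nrm a * nrm b := by rw [← hnrmp, hab, nrm_mul]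
    have hdvd : nrm a ∣ p ^ 2 := by rw [pow_two]; exact ⟨nrm b, hm⟩
    obtain ⟨i, hi2, hN⟩ := (Nat.dvd_prime_pow hp).mp hdvd
    interval_cases i
    · left; exact isUnit_iff_nrm.mpr (by simpa using hN)
    · exfalso
      apply nrm_mod3 a
      rw [hN, pow_one, h2]
    · right
      apply isUnit_iff_nrm.mpr
      rw [hN, pow_two] at hm
      have := hp.two_le
      nlinarith

lemma nrm_of_normSq {x : Eis} {n : ℕ} (h : Complex.normSq (x : ℂ) = n) : nrm x = n := by
  have : (nrm x : ℝ) = (n : ℝ) := by rw [nrm_cast, h]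
  exact_mod_cast this

/-- a prime of Eis divides some rational prime -/
lemma exists_nat_prime_dvd {x : Eis} (hx : Prime x) (hne : x ≠ 0) :
    ∃ p : ℕ, Nat.Prime p ∧ x ∣ ((p : ℕ) : Eis) := by
  have hdvd : x ∣ ((nrm x : ℕ) : Eis) := ⟨econj x, (mul_econj x).symm⟩
  have hn0 : nrm x ≠ 0 := fun h => hne (nrm_eq_zero.mp h)
  have hprod : ((nrm x : ℕ) : Eis) = ((nrm x).primeFactorsList.map (fun q : ℕ => (q : Eis))).prod := by
    conv_lhs => rw [← Nat.prod_primeFactorsList hn0]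
    exact Nat.cast_list_prod _
  rw [hprod] at hdvd
  obtain ⟨z, hz, hxz⟩ := (hx.dvd_prod_iff).mp hdvd
  obtain ⟨q, hq, rfl⟩ := List.mem_map.mp hz
  exact ⟨q, Nat.prime_of_mem_primeFactorsList hq, hxz⟩

/-- A nonzero, non-unit Eisenstein integer ϱ is prime iff exactly one of the
following mutually exclusive conditions holds:
(1) ϱ is the product of a unit of ℤ[ω] and a natural prime p ≡ 2 (mod 3);
(2) |ϱ|² = 3, or |ϱ|² is a natural prime congruent to 1 (mod 3). -/
theorem stmt_12 (ϱ : Eis) (hne : ϱ ≠ 0) (hnu : ¬ IsUnit ϱ) :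
    Prime ϱ ↔
      Xor'
        (∃ u : Eis, ∃ p : ℕ, IsUnit u ∧ Nat.Prime p ∧ p % 3 = 2 ∧ ϱ = u * (p : Eis))
        (Complex.normSq (ϱ : ℂ) = 3 ∨
          ∃ p : ℕ, Nat.Prime p ∧ p % 3 = 1 ∧ Complex.normSq (ϱ : ℂ) = p) := by
  have hn0 : nrm ϱ ≠ 0 := fun h => hne (nrm_eq_zero.mp h)
  have hn1 : nrm ϱ ≠ 1 := fun h => hnu (isUnit_iff_nrm.mpr h)
  constructor
  · intro hpr
    obtain ⟨p, hp, hdvd⟩ := exists_nat_prime_dvd hpr hne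
    have hdn : nrm ϱ ∣ p ^ 2 := by
      rw [pow_two, ← nrm_natCast]; exact nrm_dvd hdvd
    obtain ⟨i, hi2, hN⟩ := (Nat.dvd_prime_pow hp).mp hdn
    interval_cases i
    · rw [pow_zero] at hN; exact absurd hN hn1
    · rw [pow_one] at hN
      refine Or.inr ⟨?_, ?_⟩
      · have hmod := nrm_mod3 ϱ
        rw [hN] at hmod
        have hp3 : p % 3 = 0 ∨ p % 3 = 1 := by omega
        rcases hp3 with h0 | h1
        · left
          have hp3' : p = 3 :=
            ((Nat.prime_dvd_prime_iff_eq (by norm_num) hp).mp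
              (Nat.dvd_of_mod_eq_zero h0)).symm
          rw [← nrm_cast, hN, hp3']; norm_num
        · right; exact ⟨p, hp, h1, by rw [← nrm_cast, hN]⟩
      · rintro ⟨u, q, hu, hq, hq2, hϱ⟩
        have hqq : nrm ϱ = q * q := by
          rw [hϱ, nrm_mul, isUnit_iff_nrm.mp hu, one_mul, nrm_natCast]
        rw [hN] at hqq
        rcases Nat.prime_mul_iff.mp (hqq ▸ hp) with ⟨hq', h1⟩ | ⟨hq', h1⟩ <;>
          · rw [h1] at hq; exact Nat.not_prime_one hq
    · obtain ⟨c, hc⟩ := hdvd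
      have hcu : IsUnit c := by
        apply isUnit_iff_nrm.mpr
        have h' : nrm ((p:ℕ):Eis) = nrm ϱ * nrm c := by rw [hc, nrm_mul]
        rw [nrm_natCast, hN, ← pow_two] at h'
        have hmm : p ^ 2 * 1 = p ^ 2 * nrm c := by rw [mul_one]; exact h'
        exact (Nat.eq_of_mul_eq_mul_left (pow_pos hp.pos 2) hmm).symm
      obtain ⟨cu, hcu'⟩ := hcu
      rw [← hcu'] at hc
      have hassoc : Associated ϱ ((p:ℕ) : Eis) := ⟨cu, hc.symm⟩
      have hprp : Prime ((p:ℕ) : Eis) := hassoc.prime hpr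
      have hp3 : p % 3 = 2 := by
        have h012 : p % 3 = 0 ∨ p % 3 = 1 ∨ p % 3 = 2 := by omega
        rcases h012 with h0 | h1 | h2
        · exfalso
          have hp3' : p = 3 :=
            ((Nat.prime_dvd_prime_iff_eq (by norm_num) hp).mp
              (Nat.dvd_of_mod_eq_zero h0)).symm
          rw [hp3'] at hprp
          exact not_prime_three hprp
        · exact absurd hprp (not_prime_one_mod3 hp h1)
        · exact h2
      refine Or.inl ⟨⟨((cu⁻¹ : Eisˣ) : Eis), p, (cu⁻¹ : Eisˣ).isUnit, hp, hp3, ?_⟩, ?_⟩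
      · rw [hc, ← mul_assoc, mul_comm ((cu⁻¹ : Eisˣ) : Eis) ϱ, mul_assoc,
          Units.inv_mul, mul_one]
      · rintro (h3 | ⟨q, hq, hq1, hqe⟩)
        · have h3' : nrm ϱ = 3 := nrm_of_normSq (by exact_mod_cast h3)
          rw [hN] at h3'
          have := hp.two_le
          nlinarith
        · have hq' : nrm ϱ = q := nrm_of_normSq hqe
          rw [hN, pow_two] at hq'
          rcases Nat.prime_mul_iff.mp (hq' ▸ hq) with ⟨hp', h1⟩ | ⟨hp', h1⟩ <;>
            · rw [h1] at hp; exact Nat.not_prime_one hp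
  · intro h
    rcases h with ⟨⟨u, p, hu, hp, h2, hϱ⟩, -⟩ | ⟨hB, -⟩
    · obtain ⟨uu, rfl⟩ := hu
      rw [hϱ, mul_comm]
      exact Associated.prime ⟨uu, rfl⟩ (prime_two_mod3 hp h2)
    · rcases hB with h3 | ⟨q, hq, hq1, hqe⟩
      · refine prime_of_nrm_prime ?_
        rw [nrm_of_normSq (n := 3) (by exact_mod_cast h3)]
        norm_num
      · refine prime_of_nrm_prime ?_
        rw [nrm_of_normSq hqe]
        exact hq
end

section
/- Let L ≥ 1, let h, a ∈ ℂ^L, and let P > 0 be real. Define ⟨h,a⟩ = Σ_{l=1}^L conj(h_l) a_l and ‖·‖ the Euclidean norm. Then for every α ∈ ℂ, |α|² + P‖αh − a‖² ≥ P(‖a‖² − P|⟨h,a⟩|²/(1 + P‖h‖²)), and equality holds for the MMSE coefficient α = P⟨h,a⟩/(1 + P‖h‖²). In particular the minimum over α ∈ ℂ of the effective noise variance |α|² + P‖αh − a‖² equals P(‖a‖² − P|⟨h,a⟩|²/(1 + P‖h‖²)). -/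
lemma key_sum (L : ℕ) (h a : Fin L → ℂ) (α : ℂ) :
    ∑ l, Complex.normSq (α * h l - a l) =
      Complex.normSq α * (∑ l, Complex.normSq (h l)) -
        2 * ((starRingEnd ℂ) α * ∑ l, (starRingEnd ℂ) (h l) * a l).re +
        ∑ l, Complex.normSq (a l) := by
  rw [Finset.mul_sum, Finset.mul_sum, Complex.re_sum, Finset.mul_sum,
    ← Finset.sum_sub_distrib, ← Finset.sum_add_distrib]
  apply Finset.sum_congr rfl
  intro l _
  simp [Complex.normSq_apply, Complex.mul_re, Complex.mul_im, Complex.sub_re,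
    Complex.sub_im, Complex.conj_re, Complex.conj_im]
  ring

/-- MMSE completion of squares in compute-and-forward: for h, a ∈ ℂ^L and P > 0,
every α ∈ ℂ satisfies
|α|² + P‖αh − a‖² ≥ P(‖a‖² − P|⟨h,a⟩|²/(1 + P‖h‖²)),
with equality for the MMSE coefficient α = P⟨h,a⟩/(1 + P‖h‖²); hence the
minimum over α of the effective noise variance equals the right-hand side. -/
theorem stmt_16 (L : ℕ) (hL : 1 ≤ L) (h a : Fin L → ℂ) (P : ℝ) (hP : 0 < P) :
    (∀ α : ℂ,
      P * ((∑ l, ‖a l‖ ^ 2) -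
        P * ‖∑ l, (starRingEnd ℂ) (h l) * a l‖ ^ 2 /
          (1 + P * ∑ l, ‖h l‖ ^ 2)) ≤
      ‖α‖ ^ 2 + P * ∑ l, ‖α * h l - a l‖ ^ 2) ∧
    (‖(P : ℂ) * (∑ l, (starRingEnd ℂ) (h l) * a l) /
          ((1 + P * ∑ l, ‖h l‖ ^ 2 : ℝ) : ℂ)‖ ^ 2 +
        P * ∑ l, ‖((P : ℂ) * (∑ l, (starRingEnd ℂ) (h l) * a l) /
          ((1 + P * ∑ l, ‖h l‖ ^ 2 : ℝ) : ℂ)) * h l - a l‖ ^ 2 =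
      P * ((∑ l, ‖a l‖ ^ 2) -
        P * ‖∑ l, (starRingEnd ℂ) (h l) * a l‖ ^ 2 /
          (1 + P * ∑ l, ‖h l‖ ^ 2))) := by
  simp only [Complex.sq_norm]
  set T : ℂ := ∑ l, (starRingEnd ℂ) (h l) * a l with hT
  set S : ℝ := ∑ l, Complex.normSq (h l) with hS
  set A : ℝ := ∑ l, Complex.normSq (a l) with hA
  have hS0 : 0 ≤ S := Finset.sum_nonneg fun l _ => Complex.normSq_nonneg _
  have hc : 0 < 1 + P * S := by positivity
  have hc' : (1 + P * S : ℝ) ≠ 0 := ne_of_gt hc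
  constructor
  · intro α
    rw [key_sum]
    have e1 : P * (A - P * Complex.normSq T / (1 + P * S)) =
        (P * A * (1 + P * S) - P * P * Complex.normSq T) / (1 + P * S) := by
      field_simp
    rw [e1, div_le_iff₀ hc]
    have hre : ((starRingEnd ℂ) α * T).re = α.re * T.re + α.im * T.im := by
      simp [Complex.mul_re, Complex.conj_re, Complex.conj_im]
    rw [hre]
    have hnα : Complex.normSq α = α.re ^ 2 + α.im ^ 2 := by
      simp [Complex.normSq_apply]; ring
    have hnT : Complex.normSq T = T.re ^ 2 + T.im ^ 2 := by
      simp [Complex.normSq_apply]; ring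
    rw [hnα, hnT]
    nlinarith [sq_nonneg ((1 + P * S) * α.re - P * T.re),
      sq_nonneg ((1 + P * S) * α.im - P * T.im), sq_nonneg α.re, sq_nonneg α.im]
  · rw [key_sum]
    have h1 : Complex.normSq ((P : ℂ) * T / ((1 + P * S : ℝ) : ℂ)) =
        P ^ 2 * Complex.normSq T / (1 + P * S) ^ 2 := by
      rw [Complex.normSq_div, Complex.normSq_mul, Complex.normSq_ofReal,
        Complex.normSq_ofReal]
      ring
    have h2 : ((starRingEnd ℂ) ((P : ℂ) * T / ((1 + P * S : ℝ) : ℂ)) * T).re =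
        P * Complex.normSq T / (1 + P * S) := by
      rw [map_div₀, map_mul, Complex.conj_ofReal, Complex.conj_ofReal,
        div_mul_eq_mul_div, mul_assoc, ← Complex.normSq_eq_conj_mul_self,
        ← Complex.ofReal_mul, ← Complex.ofReal_div, Complex.ofReal_re]
    rw [h1, h2]
    field_simp
    ring
end

section
/- Let L ≥ 1, h, a ∈ ℂ^L, and P > 0 real. Then P · a^H (I + P·h h^H)^{−1} a = P(‖a‖² − P|h^H a|²/(1 + P‖h‖²)), where h^H a = Σ_l conj(h_l) a_l and h h^H is the L×L matrix with entries h_i conj(h_j). In particular, the effective noise variance σ_eff² = P(‖a‖² − P|h^H a|²/(1 + P‖h‖²)) of compute-and-forward equals the positive-definite quadratic form P·a^H (I + P·h h^H)^{−1} a, so maximizing the computation rate over a is equivalent to minimizing this quadratic form (a shortest vector problem). -/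
open Matrix

/-- The effective noise variance of compute-and-forward as a quadratic form:
P·aᴴ(I + P·hhᴴ)⁻¹a = P(‖a‖² − P|hᴴa|²/(1 + P‖h‖²)). -/
theorem stmt_18 (L : ℕ) (hL : 1 ≤ L) (h a : Fin L → ℂ) (P : ℝ) (hP : 0 < P) :
    (P : ℂ) * dotProduct (star a)
        ((((1 : Matrix (Fin L) (Fin L) ℂ) +
          (P : ℂ) • Matrix.of (fun i j => h i * (starRingEnd ℂ) (h j)))⁻¹).mulVec a) =
      ((P * ((∑ l, ‖a l‖ ^ 2) -
        P * ‖∑ l, (starRingEnd ℂ) (h l) * a l‖ ^ 2 /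
          (1 + P * ∑ l, ‖h l‖ ^ 2)) : ℝ) : ℂ) := by
  set hh : Matrix (Fin L) (Fin L) ℂ := Matrix.of (fun i j => h i * (starRingEnd ℂ) (h j))
  set S : ℝ := ∑ l, ‖h l‖ ^ 2 with hS
  have hSnn : 0 ≤ S := Finset.sum_nonneg fun l _ => by positivity
  set c : ℝ := 1 + P * S with hc
  have hcpos : 0 < c := by positivity
  have hcne : (c : ℂ) ≠ 0 := by
    exact_mod_cast Complex.ofReal_ne_zero.mpr hcpos.ne'
  -- sum of conj h * h equals S
  have hsum : ∑ k, (starRingEnd ℂ) (h k) * h k = (S : ℂ) := by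
    rw [hS]
    push_cast
    refine Finset.sum_congr rfl fun k _ => ?_
    rw [mul_comm, Complex.mul_conj]
    norm_cast
    exact Complex.normSq_eq_norm_sq _
  -- hh * hh = S • hh
  have hhh : hh * hh = (S : ℂ) • hh := by
    ext i j
    simp only [Matrix.mul_apply, Matrix.smul_apply, hh, Matrix.of_apply, smul_eq_mul]
    rw [← hsum, Finset.sum_mul]
    refine Finset.sum_congr rfl fun k _ => ?_
    ring
  set M : Matrix (Fin L) (Fin L) ℂ := 1 + (P : ℂ) • hh with hM
  set N : Matrix (Fin L) (Fin L) ℂ := 1 - ((P / c : ℝ) : ℂ) • hh with hN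
  have hMN : M * N = 1 := by
    rw [hM, hN, add_mul, one_mul, mul_sub, mul_one, mul_smul_comm, smul_mul_assoc,
      smul_smul, hhh, smul_smul]
    match_scalars
    · ring
    · field_simp
      push_cast [hc]
      ring
  have hinv : M⁻¹ = N := Matrix.inv_eq_right_inv hMN
  rw [hinv]
  -- compute the quadratic form with N
  set d : ℂ := ∑ l, (starRingEnd ℂ) (h l) * a l with hd
  have haa : dotProduct (star a) a = ((∑ l, ‖a l‖ ^ 2 : ℝ) : ℂ) := by
    push_cast
    simp only [dotProduct, Pi.star_apply]
    refine Finset.sum_congr rfl fun l _ => ?_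
    rw [mul_comm, RCLike.star_def, Complex.mul_conj]
    norm_cast
    exact Complex.normSq_eq_norm_sq _
  have habs : (starRingEnd ℂ) d * d = ((‖d‖ ^ 2 : ℝ) : ℂ) := by
    rw [mul_comm, Complex.mul_conj]
    norm_cast
    exact Complex.normSq_eq_norm_sq _
  have key : ∀ i, star (a i) * (∑ j, h i * (starRingEnd ℂ) (h j) * a j)
      = (star (a i) * h i) * d := by
    intro i
    rw [hd, Finset.mul_sum, Finset.mul_sum]
    exact Finset.sum_congr rfl fun j _ => by ring
  have hha : dotProduct (star a) (hh.mulVec a) = ((‖d‖ ^ 2 : ℝ) : ℂ) := by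
    rw [← habs]
    simp only [dotProduct, Matrix.mulVec, hh, Matrix.of_apply, Pi.star_apply]
    simp only [dotProduct, key]
    rw [← Finset.sum_mul]
    congr 1
    rw [hd, map_sum]
    refine Finset.sum_congr rfl fun i _ => ?_
    simp only [_root_.map_mul, Complex.conj_conj, RCLike.star_def]
    ring
  rw [hN, Matrix.sub_mulVec, dotProduct_sub, Matrix.one_mulVec, haa]
  rw [Matrix.smul_mulVec, dotProduct_smul, hha]
  push_cast
  rw [smul_eq_mul]
  field_simp
end
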